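/- arXiv:2409.15198 — 2 statements merged into one kernel-verified Lean document; each statement's English description precedes it below -/
import Mathlib

section
/- Let f : [a, b] → ℝ be continuously differentiable with f(a) = f(b) = 0 (compact support in (a,b)), and let w : [a,b] → ℝ be C¹ with w > 0 and w'(t) ≥ c·w(t) for some c > 0 on [a,b]. Then ∫_a^b f(t)² w(t) dt ≤ (2/c) (∫_a^b f'(t)² w(t) dt)^{1/2} (∫_a^b f(t)² w(t) dt)^{1/2}, and consequently ∫_a^b f(t)² w(t) dt ≤ (4/c²) ∫_a^b f'(t)² w(t) dt. -/
open intervalIntegral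

set_option maxHeartbeats 1600000 in
/-- One-dimensional Poincaré/absorption estimate: for f C¹ with f(a) = f(b) = 0 and a C¹
weight w > 0 with w' ≥ c·w (c > 0) on [a,b]:
∫ f²w ≤ (2/c)(∫ f'²w)^{1/2}(∫ f²w)^{1/2} and ∫ f²w ≤ (4/c²)∫ f'²w. -/
theorem stmt9 (a b c : ℝ) (hab : a < b) (hc : 0 < c)
    (f f' w w' : ℝ → ℝ)
    (hf : ∀ t ∈ Set.Icc a b, HasDerivAt f (f' t) t)
    (hw : ∀ t ∈ Set.Icc a b, HasDerivAt w (w' t) t)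
    (hf'c : ContinuousOn f' (Set.Icc a b)) (hw'c : ContinuousOn w' (Set.Icc a b))
    (hfa : f a = 0) (hfb : f b = 0)
    (hwpos : ∀ t ∈ Set.Icc a b, 0 < w t)
    (hww' : ∀ t ∈ Set.Icc a b, c * w t ≤ w' t) :
    (∫ t in a..b, (f t) ^ 2 * w t) ≤
        (2 / c) * Real.sqrt (∫ t in a..b, (f' t) ^ 2 * w t) *
          Real.sqrt (∫ t in a..b, (f t) ^ 2 * w t) ∧
    (∫ t in a..b, (f t) ^ 2 * w t) ≤ (4 / c ^ 2) * ∫ t in a..b, (f' t) ^ 2 * w t := by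
  have huIcc : Set.uIcc a b = Set.Icc a b := Set.uIcc_of_le hab.le
  have hfc : ContinuousOn f (Set.Icc a b) := fun t ht => ((hf t ht).continuousAt).continuousWithinAt
  have hwc : ContinuousOn w (Set.Icc a b) := fun t ht => ((hw t ht).continuousAt).continuousWithinAt
  set I := ∫ t in a..b, (f t) ^ 2 * w t with hI
  set J := ∫ t in a..b, (f' t) ^ 2 * w t with hJ
  -- integrability facts
  have int1 : IntervalIntegrable (fun t => (f t) ^ 2 * w t) MeasureTheory.volume a b := by
    apply ContinuousOn.intervalIntegrable
    rw [huIcc]; exact ((hfc.pow 2).mul hwc)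
  have int2 : IntervalIntegrable (fun t => (f' t) ^ 2 * w t) MeasureTheory.volume a b := by
    apply ContinuousOn.intervalIntegrable
    rw [huIcc]; exact ((hf'c.pow 2).mul hwc)
  have int3 : IntervalIntegrable (fun t => (f t) ^ 2 * w' t) MeasureTheory.volume a b := by
    apply ContinuousOn.intervalIntegrable
    rw [huIcc]; exact ((hfc.pow 2).mul hw'c)
  have int4 : IntervalIntegrable (fun t => 2 * f t * f' t) MeasureTheory.volume a b := by
    apply ContinuousOn.intervalIntegrable
    rw [huIcc]; exact ((continuousOn_const.mul hfc).mul hf'c)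
  have int4w : IntervalIntegrable (fun t => 2 * f t * f' t * w t) MeasureTheory.volume a b := by
    apply ContinuousOn.intervalIntegrable
    rw [huIcc]; exact (((continuousOn_const.mul hfc).mul hf'c).mul hwc)
  have hInn : 0 ≤ I := by
    apply intervalIntegral.integral_nonneg hab.le
    intro t ht; exact mul_nonneg (sq_nonneg _) (hwpos t ht).le
  have hJnn : 0 ≤ J := by
    apply intervalIntegral.integral_nonneg hab.le
    intro t ht; exact mul_nonneg (sq_nonneg _) (hwpos t ht).le
  -- integration by parts
  have parts : (∫ t in a..b, (f t) ^ 2 * w' t)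
      = - ∫ t in a..b, 2 * f t * f' t * w t := by
    have := intervalIntegral.integral_mul_deriv_eq_deriv_mul
      (u := fun t => (f t) ^ 2) (u' := fun t => 2 * f t * f' t)
      (v := w) (v' := w')
      (fun t ht => by
        have := (hf t (huIcc ▸ ht)).pow 2
        simpa [Pi.pow_def, mul_comm, mul_assoc, mul_left_comm] using this)
      (fun t ht => hw t (huIcc ▸ ht))
      int4
      (by apply ContinuousOn.intervalIntegrable; rw [huIcc]; exact hw'c)
    rw [this]; simp [hfa, hfb]
  -- key inequality: ∀ ε > 0, c * I ≤ ε * J + (1/ε) * I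
  have key : ∀ ε : ℝ, 0 < ε → c * I ≤ ε * J + (1/ε) * I := by
    intro ε hε
    have h1 : c * I ≤ ∫ t in a..b, (f t) ^ 2 * w' t := by
      rw [← intervalIntegral.integral_const_mul]
      apply intervalIntegral.integral_mono_on hab.le (int1.const_mul c) int3
      intro t ht
      have h := hww' t ht
      have hf2 : (0:ℝ) ≤ (f t) ^ 2 := sq_nonneg _
      nlinarith [hf2, hwpos t ht]
    have h2 : (- ∫ t in a..b, 2 * f t * f' t * w t)
        ≤ ∫ t in a..b, (ε * (f' t) ^ 2 + (1/ε) * (f t) ^ 2) * w t := by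
      rw [← intervalIntegral.integral_neg]
      apply intervalIntegral.integral_mono_on hab.le int4w.neg
      · apply ContinuousOn.intervalIntegrable
        rw [huIcc]
        exact (((continuousOn_const.mul (hf'c.pow 2)).add
          (continuousOn_const.mul (hfc.pow 2))).mul hwc)
      · intro t ht
        simp only [Pi.neg_apply]
        have hwnn := (hwpos t ht).le
        have hkey : ε * (f' t) ^ 2 * w t + (1/ε) * (f t) ^ 2 * w t + 2 * f t * f' t * w t
            = (1/ε) * (w t * (ε * f' t + f t) ^ 2) := by
          field_simp; ring
        have hpos : 0 ≤ (1/ε) * (w t * (ε * f' t + f t) ^ 2) := by positivity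
        nlinarith [hpos, hkey]
    have h3 : (∫ t in a..b, (ε * (f' t) ^ 2 + (1/ε) * (f t) ^ 2) * w t)
        = ε * J + (1/ε) * I := by
      rw [hJ, hI, ← intervalIntegral.integral_const_mul, ← intervalIntegral.integral_const_mul,
        ← intervalIntegral.integral_add (int2.const_mul ε) (int1.const_mul (1/ε))]
      congr 1; ext t; ring
    calc c * I ≤ ∫ t in a..b, (f t) ^ 2 * w' t := h1
      _ = - ∫ t in a..b, 2 * f t * f' t * w t := parts
      _ ≤ _ := h2
      _ = ε * J + (1/ε) * I := h3
  -- derive the sqrt inequality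
  have hsI : Real.sqrt I * Real.sqrt I = I := Real.mul_self_sqrt hInn
  have hsJ : Real.sqrt J * Real.sqrt J = J := Real.mul_self_sqrt hJnn
  have main : c * I ≤ 2 * Real.sqrt J * Real.sqrt I := by
    rcases eq_or_lt_of_le hInn with hI0 | hIpos
    · rw [← hI0]
      simp [Real.sqrt_nonneg]
    · have hJpos : 0 < J := by
        rcases eq_or_lt_of_le hJnn with hJ0 | h
        · exfalso
          have h := key (2/c) (by positivity)
          rw [← hJ0] at h
          have : c * I ≤ (c/2) * I := by
            have : (1 / (2/c)) = c/2 := by field_simp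
            nlinarith [h]
          nlinarith
        · exact h
      have hsIpos : 0 < Real.sqrt I := Real.sqrt_pos.mpr hIpos
      have hsJpos : 0 < Real.sqrt J := Real.sqrt_pos.mpr hJpos
      have h := key (Real.sqrt I / Real.sqrt J) (by positivity)
      have e1 : (Real.sqrt I / Real.sqrt J) * J = Real.sqrt I * Real.sqrt J := by
        field_simp
        nlinarith [hsJ]
      have e2 : (1 / (Real.sqrt I / Real.sqrt J)) * I = Real.sqrt I * Real.sqrt J := by
        field_simp
        nlinarith [hsI]
      rw [e1, e2] at h
      nlinarith [h]
  clear_value I J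
  constructor
  · rw [div_mul_eq_mul_div, div_mul_eq_mul_div, le_div_iff₀ hc]
    linarith [main]
  · rcases eq_or_lt_of_le hInn with hI0 | hIpos
    · rw [← hI0]; positivity
    · have hsIpos : 0 < Real.sqrt I := Real.sqrt_pos.mpr hIpos
      have h1 : c * Real.sqrt I ≤ 2 * Real.sqrt J := by
        have : c * (Real.sqrt I * Real.sqrt I) ≤ 2 * Real.sqrt J * Real.sqrt I := by
          rw [hsI]; exact main
        nlinarith
      have h2 : c ^ 2 * I ≤ 4 * J := by
        nlinarith [mul_le_mul h1 h1 (by positivity) (by positivity : (0:ℝ) ≤ 2 * Real.sqrt J),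
          hsI, hsJ]
      rw [div_mul_eq_mul_div, le_div_iff₀ (by positivity : (0:ℝ) < c ^ 2)]
      linarith [h2]
end

section
/- Let f ∈ C¹_c((-∞, T₀)) and τ ≥ 1. Then τ² ∫ f(t)² e^{-t} e^{-2τφ(t)} dt ≤ C ∫ f'(t)² e^{-t} e^{-2τφ(t)} dt, where φ(t) = t + ln(t²) and C is an absolute constant (using φ'(t) ≥ 1/2 for t ≤ T₀ with |T₀| large). -/
open MeasureTheory Filter

private lemma cont_aux10 (F a : ℝ → ℝ) (hF : Continuous F) (hF0 : ∀ᶠ t in nhds (0:ℝ), F t = 0)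
    (ha : ∀ x : ℝ, x ≠ 0 → ContinuousAt a x) : Continuous (fun t => F t * a t) := by
  rw [continuous_iff_continuousAt]
  intro x
  by_cases hx : x = 0
  · subst hx
    have h : (fun t => F t * a t) =ᶠ[nhds (0:ℝ)] fun _ => 0 :=
      hF0.mono (by intro t ht; simp [ht])
    exact ContinuousAt.congr continuousAt_const h.symm
  · exact hF.continuousAt.mul (ha x hx)

/-- Quantitative absorption with the weight e^{-t}e^{-2τφ(t)}, φ(t) = t + ln(t²):
there are an absolute constant C > 0 and T₀ < 0 such that for every C¹ function f
compactly supported in (-∞, T₀) and every τ ≥ 1,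
τ² ∫ f² e^{-t} e^{-2τφ} ≤ C ∫ (f')² e^{-t} e^{-2τφ}. -/
theorem stmt10 :
    ∃ C > (0 : ℝ), ∃ T₀ < (0 : ℝ), ∀ (f f' : ℝ → ℝ) (τ : ℝ), 1 ≤ τ →
      (∀ t, HasDerivAt f (f' t) t) → Continuous f' → HasCompactSupport f →
      tsupport f ⊆ Set.Iio T₀ →
      τ ^ 2 * ∫ t : ℝ, (f t) ^ 2 *
          (Real.exp (-t) * Real.exp (-2 * τ * (t + Real.log (t ^ 2)))) ≤
        C * ∫ t : ℝ, (f' t) ^ 2 *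
          (Real.exp (-t) * Real.exp (-2 * τ * (t + Real.log (t ^ 2)))) := by
  refine ⟨4, by norm_num, -4, by norm_num, ?_⟩
  intro f f' τ hτ hderiv hf'c hcs hsupp
  have hτ0 : (0:ℝ) < τ := lt_of_lt_of_le one_pos hτ
  set w : ℝ → ℝ := fun t => Real.exp (-t) * Real.exp (-2 * τ * (t + Real.log (t ^ 2))) with hw
  set ψ : ℝ → ℝ := fun t => 1 + 2 * τ * (1 + 2 / t) with hψ
  have hwpos : ∀ t, 0 < w t := fun t => mul_pos (Real.exp_pos _) (Real.exp_pos _)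
  have hfc : Continuous f := continuous_iff_continuousAt.2 fun x => (hderiv x).continuousAt
  -- f and f' vanish off tsupport f
  have hf'0 : ∀ t, t ∉ tsupport f → f' t = 0 := by
    intro t ht
    have h0 : f =ᶠ[nhds t] 0 := notMem_tsupport_iff_eventuallyEq.1 ht
    exact (((hasDerivAt_const t (0:ℝ)).congr_of_eventuallyEq h0).unique (hderiv t)).symm
  have h0notin : (0:ℝ) ∉ tsupport f := fun h => by
    have := hsupp h; simp at this; linarith
  have hne : ∀ᶠ t in nhds (0:ℝ), t ∉ tsupport f :=
    (isClosed_tsupport f).isOpen_compl.eventually_mem h0notin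
  have hf0near : ∀ᶠ t in nhds (0:ℝ), f t = 0 :=
    hne.mono fun t ht => image_eq_zero_of_notMem_tsupport ht
  have hf'0near : ∀ᶠ t in nhds (0:ℝ), f' t = 0 := hne.mono fun t ht => hf'0 t ht
  -- continuity of w and ψ·w away from 0
  have hWcont : ∀ x : ℝ, x ≠ 0 → ContinuousAt w x := by
    intro x hx
    have hlogc : ContinuousAt (fun t : ℝ => Real.log (t ^ 2)) x :=
      ContinuousAt.comp (x := x) (g := Real.log)
        (Real.continuousAt_log (pow_ne_zero 2 hx)) ((continuous_pow 2).continuousAt)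
    exact (Real.continuous_exp.continuousAt.comp continuousAt_id.neg).mul
      (Real.continuous_exp.continuousAt.comp
        (continuousAt_const.mul (continuousAt_id.add hlogc)))
  have hψWcont : ∀ x : ℝ, x ≠ 0 → ContinuousAt (fun t => ψ t * w t) x := by
    intro x hx
    exact (continuousAt_const.add (continuousAt_const.mul
      (continuousAt_const.add (continuousAt_const.div continuousAt_id hx)))).mul (hWcont x hx)
  -- compact support helper
  have hCS : ∀ (I : ℝ → ℝ), (∀ t, t ∉ tsupport f → I t = 0) → HasCompactSupport I := by
    intro I hI
    have hsub : Function.support I ⊆ tsupport f := fun t ht => by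
      by_contra h; exact ht (hI t h)
    exact hcs.of_isClosed_subset (isClosed_tsupport _)
      (closure_minimal hsub (isClosed_tsupport f))
  -- integrable pieces
  have hI1c : Continuous (fun t => f t ^ 2 * w t) :=
    cont_aux10 _ w (hfc.pow 2) (hf0near.mono fun t ht => by simp [ht]) hWcont
  have hI1cs : HasCompactSupport (fun t => f t ^ 2 * w t) :=
    hCS _ fun t ht => by simp [image_eq_zero_of_notMem_tsupport ht]
  have hI1 : Integrable (fun t => f t ^ 2 * w t) := hI1c.integrable_of_hasCompactSupport hI1cs
  have hI2c : Continuous (fun t => f' t ^ 2 * w t) :=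
    cont_aux10 _ w (hf'c.pow 2) (hf'0near.mono fun t ht => by simp [ht]) hWcont
  have hI2cs : HasCompactSupport (fun t => f' t ^ 2 * w t) :=
    hCS _ fun t ht => by simp [hf'0 t ht]
  have hI2 : Integrable (fun t => f' t ^ 2 * w t) := hI2c.integrable_of_hasCompactSupport hI2cs
  have hI3c : Continuous (fun t => (f t * f' t) * w t) :=
    cont_aux10 _ w (hfc.mul hf'c) (hf0near.mono fun t ht => by simp [ht]) hWcont
  have hI3cs : HasCompactSupport (fun t => (f t * f' t) * w t) :=
    hCS _ fun t ht => by simp [image_eq_zero_of_notMem_tsupport ht]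
  have hI3 : Integrable (fun t => (f t * f' t) * w t) :=
    hI3c.integrable_of_hasCompactSupport hI3cs
  have hI4c : Continuous (fun t => f t ^ 2 * (ψ t * w t)) :=
    cont_aux10 _ _ (hfc.pow 2) (hf0near.mono fun t ht => by simp [ht]) hψWcont
  have hI4cs : HasCompactSupport (fun t => f t ^ 2 * (ψ t * w t)) :=
    hCS _ fun t ht => by simp [image_eq_zero_of_notMem_tsupport ht]
  have hI4 : Integrable (fun t => f t ^ 2 * (ψ t * w t)) :=
    hI4c.integrable_of_hasCompactSupport hI4cs
  -- derivative of w away from 0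
  have hwderiv : ∀ x : ℝ, x ≠ 0 → HasDerivAt w (-(ψ x) * w x) x := by
    intro x hx
    have hlog : HasDerivAt (fun t => Real.log (t ^ 2)) (2 / x) x := by
      have h := (hasDerivAt_pow 2 x).log (pow_ne_zero 2 hx)
      convert h using 1
      field_simp
      ring
    have hv : HasDerivAt (fun t => -2 * τ * (t + Real.log (t ^ 2)))
        (-2 * τ * (1 + 2 / x)) x :=
      HasDerivAt.const_mul (-2 * τ) ((hasDerivAt_id x).add hlog)
    have h1 : HasDerivAt (fun t : ℝ => Real.exp (-t)) (Real.exp (-x) * (-1)) x :=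
      (hasDerivAt_neg x).exp
    have h2 := h1.mul hv.exp
    refine h2.congr_deriv ?_
    simp only [hw, hψ]
    ring
  -- the function g = f² w and its derivative G
  set G : ℝ → ℝ := fun t => 2 * ((f t * f' t) * w t) - f t ^ 2 * (ψ t * w t) with hG
  have hGint : Integrable G := (hI3.const_mul 2).sub hI4
  have hgderiv : ∀ t, HasDerivAt (fun s => f s ^ 2 * w s) (G t) t := by
    intro t
    by_cases ht : t ∈ tsupport f
    · have ht4 : t < -4 := hsupp ht
      have ht0 : t ≠ 0 := by linarith
      have h := ((hderiv t).pow 2).mul (hwderiv t ht0)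
      refine h.congr_deriv ?_
      simp only [hG, Pi.pow_apply]
      ring
    · have h0 : f =ᶠ[nhds t] 0 := notMem_tsupport_iff_eventuallyEq.1 ht
      have hg0 : (fun s => f s ^ 2 * w s) =ᶠ[nhds t] fun _ => 0 :=
        h0.mono fun s hs => by simp [hs]
      have : HasDerivAt (fun s => f s ^ 2 * w s) 0 t :=
        (hasDerivAt_const t (0:ℝ)).congr_of_eventuallyEq hg0
      convert this using 1
      simp [hG, image_eq_zero_of_notMem_tsupport ht]
  have hgcs : HasCompactSupport (fun t => f t ^ 2 * w t) := hI1cs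
  have hzero : Tendsto (fun t => f t ^ 2 * w t) (Filter.cocompact ℝ) (nhds 0) :=
    hgcs.is_zero_at_infty
  have hbot : Tendsto (fun t => f t ^ 2 * w t) atBot (nhds 0) :=
    hzero.mono_left (by rw [cocompact_eq_atBot_atTop]; exact le_sup_left)
  have htop : Tendsto (fun t => f t ^ 2 * w t) atTop (nhds 0) :=
    hzero.mono_left (by rw [cocompact_eq_atBot_atTop]; exact le_sup_right)
  have hintG : ∫ t, G t = 0 := by
    rw [integral_of_hasDerivAt_of_tendsto hgderiv hGint hbot htop]; ring
  -- parts identity : ∫ I₄ = 2 ∫ I₃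
  have hparts : ∫ t, f t ^ 2 * (ψ t * w t) = 2 * ∫ t, (f t * f' t) * w t := by
    have := hintG
    rw [hG] at this
    rw [integral_sub (hI3.const_mul 2) hI4, integral_const_mul _ _] at this
    linarith
  -- lower bound : (1+τ) A ≤ ∫ I₄
  set A := ∫ t, f t ^ 2 * w t with hA
  set B := ∫ t, f' t ^ 2 * w t with hB
  have hlow : (1 + τ) * A ≤ ∫ t, f t ^ 2 * (ψ t * w t) := by
    rw [hA, ← integral_const_mul _ _]
    refine integral_mono (hI1.const_mul _) hI4 fun t => ?_
    by_cases hft : f t = 0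
    · simp [hft]
    · have htin : t ∈ tsupport f := subset_closure (by exact hft)
      have ht4 : t < -4 := hsupp htin
      have ht0 : t < 0 := by linarith
      have hdiv : -1/2 ≤ 2 / t := by
        rw [le_div_iff_of_neg ht0]; linarith
      have hψge : 1 + τ ≤ ψ t := by
        simp only [hψ]
        nlinarith
      have hfw : 0 ≤ f t ^ 2 * w t := mul_nonneg (sq_nonneg _) (hwpos t).le
      calc (1 + τ) * (f t ^ 2 * w t) ≤ ψ t * (f t ^ 2 * w t) :=
            mul_le_mul_of_nonneg_right hψge hfw
        _ = f t ^ 2 * (ψ t * w t) := by ring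
  -- upper bound : 2 ∫ I₃ ≤ (τ/2) A + (2/τ) B
  have hup : 2 * ∫ t, (f t * f' t) * w t ≤ (τ/2) * A + (2/τ) * B := by
    rw [hA, hB, ← integral_const_mul _ _, ← integral_const_mul _ _, ← integral_const_mul _ _,
      ← integral_add (hI1.const_mul _) (hI2.const_mul _)]
    refine integral_mono (hI3.const_mul 2) ((hI1.const_mul _).add (hI2.const_mul _)) fun t => ?_
    have hW := (hwpos t).le
    rw [← sub_nonneg]
    have hkey : (τ/2) * (f t ^ 2 * w t) + (2/τ) * (f' t ^ 2 * w t)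
        - 2 * ((f t * f' t) * w t) = (w t / (2 * τ)) * (τ * f t - 2 * f' t) ^ 2 := by
      field_simp
      ring
    rw [hkey]
    positivity
  have hA0 : 0 ≤ A :=
    integral_nonneg fun t => mul_nonneg (sq_nonneg _) (hwpos t).le
  have hB0 : 0 ≤ B :=
    integral_nonneg fun t => mul_nonneg (sq_nonneg _) (hwpos t).le
  -- combine
  have h5 : (1 + τ) * A ≤ (τ/2) * A + (2/τ) * B := by
    calc (1 + τ) * A ≤ ∫ t, f t ^ 2 * (ψ t * w t) := hlow
      _ = 2 * ∫ t, (f t * f' t) * w t := hparts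
      _ ≤ (τ/2) * A + (2/τ) * B := hup
  have h6 : (τ/2) * A ≤ (2/τ) * B := by nlinarith
  have h7 : (2 * τ) * ((τ/2) * A) ≤ (2 * τ) * ((2/τ) * B) :=
    mul_le_mul_of_nonneg_left h6 (by positivity)
  have h8 : (2 * τ) * ((τ/2) * A) = τ ^ 2 * A := by ring
  have h9 : (2 * τ) * ((2/τ) * B) = 4 * B := by field_simp; ring
  linarith
end
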